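/- arXiv:1904.05234 — 2 statements merged into one kernel-verified Lean document; each statement's English description precedes it below -/
import Mathlib

section
/- Let D be exponentially distributed with rate λ, and let a blind-raising player P₀ achieve payoff r > 0 against a null opponent, with fixed loss cost c > 0 for a losing player. If a reactive counterbidder P₁ with zero latency (Δ₁ = 0) counterbids every bid of P₀ within time δ, then P₁'s expected payoff, which equals e^{−λδ}·r − (1 − e^{−λδ})·c in the limit as the outbid increment ε → 0, is strictly positive if and only if c/(r + c) < e^{−λδ}. -/
/-- With auction end time `D ~ Exp(λ)`, a blind raiser `P₀` earning payoff `r > 0`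
against a null opponent, loss cost `c > 0`, and a zero-latency reactive counterbidder
`P₁` responding within time `δ`: in the limit `ε → 0` the counterbidder's expected
payoff is `e^{-λδ}·r - (1 - e^{-λδ})·c`, and it is strictly positive iff
`c/(r+c) < e^{-λδ}`. -/
theorem stmt_2 (lam δ r c : ℝ) (hlam : 0 < lam) (hδ : 0 < δ) (hr : 0 < r) (hc : 0 < c) :
    0 < Real.exp (-lam * δ) * r - (1 - Real.exp (-lam * δ)) * c ↔
      c / (r + c) < Real.exp (-lam * δ) := by
  rw [div_lt_iff₀ (by linarith)]
  constructor <;> intro h <;> nlinarith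
end

section
/- (Grim-trigger equilibrium condition) In the two-player grim-trigger cooperative PGA, the cooperative strategy profile is a Nash equilibrium if, for every interval j, the non-bidder's expected payoff from continuing to cooperate for the remainder of the game is at least her expected payoff from deviating at the start of interval j: E_cooperate^{non-bidder}(j) ≥ E_deviate^{non-bidder}(delay, j). Moreover, if deviation is strictly profitable for the non-bidder in some interval, no equilibrium holds, since by backward induction deviation is then profitable in earlier intervals as well. -/
/-- Cooperative per-interval payoff to player `b`: if interval `i` is `b`'s bidding
turn (`i ≡ b (mod 2)`), she wins `1 - W i` when the auction ends there; otherwise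
she pays the loss cost `c`. -/
noncomputable def pgaCoopPay (c : ℝ) (W : ℕ → ℝ) (b : Fin 2) (i : ℕ) : ℝ :=
  if i % 2 = b.val then 1 - W i else -c

/-- Probability that the exponential end time (rate `λ`) falls in interval
`[V i, V (i+1))`. -/
noncomputable def pgaPInt (lam : ℝ) (V : ℕ → ℝ) (i : ℕ) : ℝ :=
  Real.exp (-lam * V i) - Real.exp (-lam * V (i + 1))

/-- Expected payoff to player `b` accrued from the cooperative play of intervals
`0, …, j-1`. -/
noncomputable def pgaCoopPrefix (lam c : ℝ) (W V : ℕ → ℝ) (b : Fin 2) (j : ℕ) : ℝ :=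
  ∑ i ∈ Finset.range j, pgaPInt lam V i * pgaCoopPay c W b i

/-- `E_cooperate^{(P_b)}(j)`: expected payoff for `b` of cooperating for the rest of
the game from interval `j` on, conditioned on the auction having reached interval
`j` (intervals up to `i_max`, after which both players abandon and pay `-c`). -/
noncomputable def pgaEcoop (lam c : ℝ) (W V : ℕ → ℝ) (imax : ℕ) (b : Fin 2) (j : ℕ) : ℝ :=
  ((∑ i ∈ Finset.Icc j imax, pgaPInt lam V i * pgaCoopPay c W b i) +
      Real.exp (-lam * V (imax + 1)) * (-c)) / Real.exp (-lam * V j)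

/-- `E_deviate(delay, j)`: expected payoff of the non-bidder deviating at the start of
interval `j`, with response delay `d`: she wins `max(-c, 1 - W (j+1))` if the auction
ends within the delay (probability `p_time(d) = 1 - e^{-λd}`), else the grim trigger
fires and she gets `-c`. -/
noncomputable def pgaEdev (lam c d : ℝ) (W : ℕ → ℝ) (j : ℕ) : ℝ :=
  (1 - Real.exp (-lam * d)) * max (-c) (1 - W (j + 1)) + Real.exp (-lam * d) * (-c)

/-- First deviation in a profile of strategies (a strategy is `none` = always
cooperate, or `some j` = deviate at the start of interval `j`). -/
def pgaFirstDev (s : Fin 2 → Option ℕ) : Option (Fin 2 × ℕ) :=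
  match s 0, s 1 with
  | none, none => none
  | some j, none => some (0, j)
  | none, some j => some (1, j)
  | some j0, some j1 => if j0 ≤ j1 then some (0, j0) else some (1, j1)

/-- Expected payoff to player `b` of a strategy profile `s` in the grim-trigger
cooperative PGA: cooperative play until the first deviation; the first deviator at
interval `j` gets the deviation payoff (conditioned on reaching `j`, weighted by the
survival probability `e^{-λ V j}`), and the other player gets `-c`. -/
noncomputable def pgaPay (lam c d : ℝ) (W V : ℕ → ℝ) (imax : ℕ) (b : Fin 2)
    (s : Fin 2 → Option ℕ) : ℝ :=
  match pgaFirstDev s with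
  | none => pgaCoopPrefix lam c W V b (imax + 1) + Real.exp (-lam * V (imax + 1)) * (-c)
  | some (p, j) =>
      pgaCoopPrefix lam c W V b j +
        Real.exp (-lam * V j) * (if p = b then pgaEdev lam c d W j else -c)

/-- A deviation by player `b` is admissible if it occurs at an interval `j ≤ i_max`
in which `b` is the non-bidder (deviating while holding the top bid is never
profitable, so only non-bidder deviations need be considered). -/
def pgaValidDev (imax : ℕ) (b : Fin 2) : Option ℕ → Prop
  | none => True
  | some j => j ≤ imax ∧ j % 2 ≠ b.val

/-- The profile `s` is a Nash equilibrium: no player can strictly improve her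
expected payoff by a unilateral admissible deviation. -/
def pgaIsNash (lam c d : ℝ) (W V : ℕ → ℝ) (imax : ℕ) (s : Fin 2 → Option ℕ) : Prop :=
  ∀ b : Fin 2, ∀ s' : Option ℕ, pgaValidDev imax b s' →
    pgaPay lam c d W V imax b (Function.update s b s') ≤ pgaPay lam c d W V imax b s

/-- Grim-trigger equilibrium condition: the cooperative profile is a Nash
equilibrium if for every interval `j` the non-bidder's expected payoff from
continuing to cooperate is at least her expected payoff from deviating at the start
of `j`; moreover, if deviation is strictly profitable for the non-bidder in some
interval, no equilibrium holds. -/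
theorem stmt_11 (lam c d : ℝ) (W V : ℕ → ℝ) (imax : ℕ)
    (hlam : 0 < lam) (hc : 0 < c) (hd : 0 < d) (hV : StrictMono V) (hV0 : 0 ≤ V 0) :
    ((∀ b : Fin 2, ∀ j : ℕ, j ≤ imax → j % 2 ≠ b.val →
        pgaEdev lam c d W j ≤ pgaEcoop lam c W V imax b j) →
      pgaIsNash lam c d W V imax (fun _ => none)) ∧
    ((∃ b : Fin 2, ∃ j : ℕ, j ≤ imax ∧ j % 2 ≠ b.val ∧
        pgaEcoop lam c W V imax b j < pgaEdev lam c d W j) →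
      ¬ pgaIsNash lam c d W V imax (fun _ => none)) := by
  -- key identity: cooperative payoff splits at any j ≤ imax
  have hkey : ∀ (b : Fin 2) (j : ℕ), j ≤ imax →
      pgaCoopPrefix lam c W V b (imax + 1) + Real.exp (-lam * V (imax + 1)) * (-c)
        = pgaCoopPrefix lam c W V b j +
            Real.exp (-lam * V j) * pgaEcoop lam c W V imax b j := by
    intro b j hj
    have he : Real.exp (-lam * V j) ≠ 0 := (Real.exp_pos _).ne'
    have hsplit : pgaCoopPrefix lam c W V b (imax + 1)
        = pgaCoopPrefix lam c W V b j +
          ∑ i ∈ Finset.Icc j imax, pgaPInt lam V i * pgaCoopPay c W b i := by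
      unfold pgaCoopPrefix
      rw [← Nat.Ico_zero_eq_range, ← Finset.Ico_add_one_right_eq_Icc,
        ← Finset.sum_Ico_consecutive _ (Nat.zero_le j) (Nat.le_succ_of_le hj)]
      rw [Nat.Ico_zero_eq_range]
      rfl
    rw [hsplit, pgaEcoop, mul_div_cancel₀ _ he]
    ring
  -- payoff of deviating at (b, j)
  have hdev : ∀ (b : Fin 2) (j : ℕ),
      pgaPay lam c d W V imax b (Function.update (fun _ => none) b (some j))
        = pgaCoopPrefix lam c W V b j +
            Real.exp (-lam * V j) * pgaEdev lam c d W j := by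
    intro b j
    fin_cases b <;>
      simp [pgaPay, pgaFirstDev, Function.update, Fin.ext_iff]
  have hcoop : ∀ b : Fin 2, pgaPay lam c d W V imax b (fun _ => none)
      = pgaCoopPrefix lam c W V b (imax + 1) + Real.exp (-lam * V (imax + 1)) * (-c) := by
    intro b; simp [pgaPay, pgaFirstDev]
  constructor
  · intro h b s' hval
    cases s' with
    | none =>
      have : Function.update (fun _ : Fin 2 => (none : Option ℕ)) b none
          = fun _ => none := by
        funext x; simp [Function.update]
      rw [this]
    | some j =>
      obtain ⟨hj, hnb⟩ := hval
      rw [hdev, hcoop, hkey b j hj]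
      have := h b j hj hnb
      nlinarith [Real.exp_pos (-lam * V j)]
  · rintro ⟨b, j, hj, hnb, hlt⟩ hnash
    have h := hnash b (some j) ⟨hj, hnb⟩
    rw [hdev, hcoop, hkey b j hj] at h
    nlinarith [Real.exp_pos (-lam * V j)]
end
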